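/- Work with the Euclidean metric on ℝ^d. Let P be a probability distribution on X ⊆ B_d, fix an integer k ≥ 1, a real p ≥ 1, ε ∈ (0, 1/4], and β ≥ 1. Let x ↦ x̃ be a measurable discretization with x̃ ∈ B_d and ‖x − x̃‖₂ ≤ ε·OPT/(2p) for all x ∈ X. Suppose π : ℝ^d → ℝ^m maps {x̃ : x ∈ X} into a Euclidean ball B_m of diameter 1 and satisfies, for every k-partition 𝒞 of X, (1+ε)^{−1}·c̃ost(𝒞) ≤ c̃ost_π(𝒞) ≤ (1+ε)·c̃ost(𝒞), where c̃ost is the partition cost of the discretized distribution (points x̃, centers in B_d) and c̃ost_π is the partition cost of the projected discretized distribution (points π(x̃), centers in B_m). Let G = {g⁽¹⁾,…,g⁽ᵏ⁾} ⊆ B_m satisfy E_{x∼P}[min_j ‖π(x̃) − g⁽ʲ⁾‖₂^p] ≤ β·ÕPT_π, where ÕPT_π is the optimal (k,p)-clustering cost of the projected discretized distribution with centers in B_m. Then the partition 𝒞 of X defined by C⁽ʲ⁾ := {x ∈ X : g⁽ʲ⁾ is the nearest point of G to π(x̃)} satisfies cost(𝒞) ≤ (1+ε)⁴·β·OPT.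 -/

import Mathlib

open MeasureTheory

/-- The statistical `(k,p)`-partition cost of the labelling `g` for the pushed-forward
points `φ x`, with centers ranging over the Euclidean ball of diameter 1:
`inf_{u⁽¹⁾,…,u⁽ᵏ⁾ ∈ B} E_{x∼P}[‖φ x - u^{(g x)}‖₂^p]`. -/
noncomputable def pCost {α : Type*} [MeasurableSpace α] {m k : ℕ}
    (p : ℝ) (P : Measure α) (φ : α → EuclideanSpace ℝ (Fin m))
    (g : α → Fin k) : ℝ :=
  ⨅ u : Fin k → (Metric.closedBall (0 : EuclideanSpace ℝ (Fin m)) (1 / 2)),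
    ∫ x, ‖φ x - (u (g x) : EuclideanSpace ℝ (Fin m))‖ ^ p ∂P

/-- The optimal statistical `(k,p)`-clustering cost of the pushed-forward points `φ x`,
with `k` centers ranging over the Euclidean ball of diameter 1. -/
noncomputable def pOPT {α : Type*} [MeasurableSpace α] {m : ℕ}
    (p : ℝ) (P : Measure α) (φ : α → EuclideanSpace ℝ (Fin m)) (k : ℕ) : ℝ :=
  ⨅ u : Fin k → (Metric.closedBall (0 : EuclideanSpace ℝ (Fin m)) (1 / 2)),
    ∫ x, ⨅ j, ‖φ x - (u j : EuclideanSpace ℝ (Fin m))‖ ^ p ∂P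

section Aux

variable {α : Type*} [MeasurableSpace α]

private lemma aux_bddBelow {ι : Sort*} (q : ι → ℝ) (hq : ∀ u, 0 ≤ q u) :
    BddBelow (Set.range q) := by
  refine ⟨0, ?_⟩; rintro _ ⟨u, rfl⟩; exact hq u

private lemma aux_rpow_max_cont {p : ℝ} (hp : 0 ≤ p) :
    Continuous fun t : ℝ => max t 0 ^ p :=
  (continuous_id.max continuous_const).rpow_const fun _ => Or.inr hp

private lemma aux_measurable_rpow {p : ℝ} (hp : 0 ≤ p) {f : α → ℝ} (hf : Measurable f)
    (h0 : ∀ x, 0 ≤ f x) : Measurable fun x => f x ^ p := by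
  have he : (fun x => f x ^ p) = (fun t : ℝ => max t 0 ^ p) ∘ f := by
    funext x; simp [Function.comp, max_eq_left (h0 x)]
  rw [he]; exact (aux_rpow_max_cont hp).measurable.comp hf

private lemma aux_aemeasurable_rpow {P : Measure α} {p : ℝ} (hp : 0 ≤ p) {f : α → ℝ}
    (hf : AEMeasurable f P) (h0 : ∀ x, 0 ≤ f x) : AEMeasurable (fun x => f x ^ p) P := by
  have he : (fun x => f x ^ p) = (fun t : ℝ => max t 0 ^ p) ∘ f := by
    funext x; simp [Function.comp, max_eq_left (h0 x)]
  rw [he]; exact (aux_rpow_max_cont hp).measurable.comp_aemeasurable hf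

private lemma aux_integrable {P : Measure α} [IsProbabilityMeasure P] {f : α → ℝ}
    (hm : AEStronglyMeasurable f P) (h0 : ∀ x, 0 ≤ f x) (hb : ∀ᵐ x ∂P, f x ≤ 1) :
    Integrable f P := by
  refine (integrable_const (1 : ℝ)).mono' hm ?_
  filter_upwards [hb] with x hx
  rw [Real.norm_eq_abs, abs_of_nonneg (h0 x)]; exact hx

private lemma aux_integral_le_one {P : Measure α} [IsProbabilityMeasure P] {f : α → ℝ}
    (hm : AEStronglyMeasurable f P) (h0 : ∀ x, 0 ≤ f x) (hb : ∀ᵐ x ∂P, f x ≤ 1) :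
    ∫ x, f x ∂P ≤ 1 := by
  calc ∫ x, f x ∂P ≤ ∫ _, (1 : ℝ) ∂P :=
        integral_mono_ae (aux_integrable hm h0 hb) (integrable_const 1) hb
    _ = 1 := by simp

private lemma aux_ciInf_attained {ι : Type*} [Finite ι] [Nonempty ι] (a : ι → ℝ) :
    ∃ j, (⨅ i, a i) = a j ∧ ∀ i, a j ≤ a i := by
  obtain ⟨j, hj⟩ := Finite.exists_min a
  exact ⟨j, le_antisymm (ciInf_le (Set.finite_range a).bddBelow j) (le_ciInf hj), hj⟩

private lemma aux_ciInf_rpow {ι : Type*} [Finite ι] [Nonempty ι] {p : ℝ} (hp : 0 ≤ p)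
    (a : ι → ℝ) (h0 : ∀ i, 0 ≤ a i) : (⨅ i, a i) ^ p = ⨅ i, a i ^ p := by
  obtain ⟨j, hje, hjm⟩ := aux_ciInf_attained a
  rw [hje]
  refine le_antisymm (le_ciInf fun i => Real.rpow_le_rpow (h0 j) (hjm i) hp) ?_
  exact ciInf_le (aux_bddBelow _ fun i => Real.rpow_nonneg (h0 i) p) j

/-- Minkowski-type inequality with a constant shift. -/
private lemma aux_minkowski {P : Measure α} [IsProbabilityMeasure P] {p δ : ℝ}
    (hp : 1 ≤ p) (hδ : 0 ≤ δ) {F G : α → ℝ}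
    (hFm : AEMeasurable F P) (hGm : AEMeasurable G P)
    (hF0 : ∀ x, 0 ≤ F x) (hG0 : ∀ x, 0 ≤ G x)
    (hFb : ∀ᵐ x ∂P, F x ≤ 1) (hle : ∀ᵐ x ∂P, G x ≤ F x + δ) :
    ∫ x, G x ^ p ∂P ≤ ((∫ x, F x ^ p ∂P) ^ (1 / p) + δ) ^ p := by
  have hp0 : (0 : ℝ) < p := lt_of_lt_of_le one_pos hp
  set f : α → ENNReal := fun x => ENNReal.ofReal (F x) with hfdef
  set g : α → ENNReal := fun _ => ENNReal.ofReal δ with hgdef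
  have hfm : AEMeasurable f P := ENNReal.measurable_ofReal.comp_aemeasurable hFm
  have hgm : AEMeasurable g P := aemeasurable_const
  have hB1 : ∫⁻ x, f x ^ p ∂P ≤ 1 := by
    calc ∫⁻ x, f x ^ p ∂P ≤ ∫⁻ _, 1 ∂P := by
          refine lintegral_mono_ae ?_
          filter_upwards [hFb] with x hx
          calc f x ^ p ≤ 1 ^ p :=
                ENNReal.rpow_le_rpow (by simpa [hfdef] using ENNReal.ofReal_le_one.2 hx) hp0.le
            _ = 1 := ENNReal.one_rpow p
      _ = 1 := by simp
  have hBne : ∫⁻ x, f x ^ p ∂P ≠ ⊤ := (lt_of_le_of_lt hB1 ENNReal.one_lt_top).ne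
  have hD : ∫⁻ x, g x ^ p ∂P = ENNReal.ofReal δ ^ p := by
    simp [hgdef, lintegral_const, measure_univ]
  have hmink := ENNReal.lintegral_Lp_add_le hfm hgm hp
  have hpowinv : ∀ X : ENNReal, (X ^ (1 / p)) ^ p = X := by
    intro X
    rw [← ENNReal.rpow_mul, one_div, inv_mul_cancel₀ hp0.ne', ENNReal.rpow_one]
  have hpowinv2 : ∀ X : ENNReal, (X ^ p) ^ (1 / p) = X := by
    intro X
    rw [← ENNReal.rpow_mul, one_div, mul_inv_cancel₀ hp0.ne', ENNReal.rpow_one]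
  have key : ∫⁻ x, (f x + g x) ^ p ∂P ≤
      ((∫⁻ x, f x ^ p ∂P) ^ (1 / p) + ENNReal.ofReal δ) ^ p := by
    have h1 : ∫⁻ x, (f x + g x) ^ p ∂P = ((∫⁻ x, (f + g) x ^ p ∂P) ^ (1 / p)) ^ p := by
      rw [hpowinv]; rfl
    rw [h1]
    calc ((∫⁻ x, (f + g) x ^ p ∂P) ^ (1 / p)) ^ p
        ≤ ((∫⁻ x, f x ^ p ∂P) ^ (1 / p) + (∫⁻ x, g x ^ p ∂P) ^ (1 / p)) ^ p :=
          ENNReal.rpow_le_rpow hmink hp0.le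
      _ = ((∫⁻ x, f x ^ p ∂P) ^ (1 / p) + ENNReal.ofReal δ) ^ p := by
          rw [hD, hpowinv2]
  have hA : ∫⁻ x, ENNReal.ofReal (G x) ^ p ∂P ≤ ∫⁻ x, (f x + g x) ^ p ∂P := by
    refine lintegral_mono_ae ?_
    filter_upwards [hle] with x hx
    refine ENNReal.rpow_le_rpow ?_ hp0.le
    calc ENNReal.ofReal (G x) ≤ ENNReal.ofReal (F x + δ) := ENNReal.ofReal_le_ofReal hx
      _ = f x + g x := ENNReal.ofReal_add (hF0 x) hδ
  have hGint : ∫ x, G x ^ p ∂P = (∫⁻ x, ENNReal.ofReal (G x) ^ p ∂P).toReal := by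
    rw [integral_eq_lintegral_of_nonneg_ae
      (Filter.Eventually.of_forall fun x => Real.rpow_nonneg (hG0 x) p)
      (aux_aemeasurable_rpow hp0.le hGm hG0).aestronglyMeasurable]
    congr 1
    refine lintegral_congr fun x => ?_
    rw [← ENNReal.ofReal_rpow_of_nonneg (hG0 x) hp0.le]
  have hFint : ∫ x, F x ^ p ∂P = (∫⁻ x, f x ^ p ∂P).toReal := by
    rw [integral_eq_lintegral_of_nonneg_ae
      (Filter.Eventually.of_forall fun x => Real.rpow_nonneg (hF0 x) p)
      (aux_aemeasurable_rpow hp0.le hFm hF0).aestronglyMeasurable]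
    congr 1
    refine lintegral_congr fun x => ?_
    rw [← ENNReal.ofReal_rpow_of_nonneg (hF0 x) hp0.le]
  have hB12ne : (∫⁻ x, f x ^ p ∂P) ^ (1 / p) ≠ ⊤ :=
    ENNReal.rpow_ne_top_of_nonneg (by positivity) hBne
  have hRne : ((∫⁻ x, f x ^ p ∂P) ^ (1 / p) + ENNReal.ofReal δ) ^ p ≠ ⊤ :=
    ENNReal.rpow_ne_top_of_nonneg hp0.le
      (ENNReal.add_ne_top.2 ⟨hB12ne, ENNReal.ofReal_ne_top⟩)
  have hmono := ENNReal.toReal_mono hRne (hA.trans key)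
  rw [hGint, hFint]
  refine hmono.trans (le_of_eq ?_)
  rw [← ENNReal.toReal_rpow, ENNReal.toReal_add hB12ne ENNReal.ofReal_ne_top,
    ← ENNReal.toReal_rpow, ENNReal.toReal_ofReal hδ]

/-- The distortion function `t ↦ (t^{1/p} + δ)^p`. -/
private noncomputable def fdel (p δ : ℝ) : ℝ → ℝ := fun t => (max t 0 ^ (1 / p) + δ) ^ p

private lemma fdel_of_nonneg {p δ t : ℝ} (ht : 0 ≤ t) :
    fdel p δ t = (t ^ (1 / p) + δ) ^ p := by rw [fdel, max_eq_left ht]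

private lemma fdel_mono {p δ : ℝ} (hp : 1 ≤ p) (hδ : 0 ≤ δ) : Monotone (fdel p δ) := by
  intro a b hab
  have hp0 : (0 : ℝ) < p := lt_of_lt_of_le one_pos hp
  have h1 : max a 0 ^ (1 / p) ≤ max b 0 ^ (1 / p) :=
    Real.rpow_le_rpow (le_max_right a 0) (max_le_max hab le_rfl) (by positivity)
  have h2 : (0 : ℝ) ≤ max a 0 ^ (1 / p) + δ :=
    add_nonneg (Real.rpow_nonneg (le_max_right a 0) _) hδ
  exact Real.rpow_le_rpow h2 (by linarith) hp0.le

private lemma fdel_cont {p δ : ℝ} (hp : 1 ≤ p) : Continuous (fdel p δ) := by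
  have hp0 : (0 : ℝ) < p := lt_of_lt_of_le one_pos hp
  exact (((continuous_id.max continuous_const).rpow_const
    fun _ => Or.inr (by positivity)).add continuous_const).rpow_const fun _ => Or.inr hp0.le

private lemma fdel_ciInf {ι : Sort*} [Nonempty ι] {p δ : ℝ} (hp : 1 ≤ p) (hδ : 0 ≤ δ)
    (J : ι → ℝ) (hJ : BddBelow (Set.range J)) :
    fdel p δ (⨅ u, J u) = ⨅ u, fdel p δ (J u) :=
  Monotone.map_ciInf_of_continuousAt ((fdel_cont hp).continuousAt) (fdel_mono hp hδ) hJ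

/-- A measurable selection of the pointwise argmin of finitely many measurable functions. -/
private lemma exists_measurable_argmin {k : ℕ} [Nonempty (Fin k)]
    (f : Fin k → α → ℝ) (hf : ∀ j, Measurable (f j)) :
    ∃ g : α → Fin k, Measurable g ∧ ∀ x j, f (g x) x ≤ f j x := by
  classical
  set M : Fin k → Set α := fun j => {x | ∀ i, f j x ≤ f i x} with hM
  have hMmeas : ∀ j, MeasurableSet (M j) := by
    intro j
    simp only [hM, Set.setOf_forall]
    exact MeasurableSet.iInter fun i => measurableSet_le (hf j) (hf i)
  have hne : ∀ x : α, (Finset.univ.filter fun j : Fin k => x ∈ M j).Nonempty := by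
    intro x
    obtain ⟨j, hj⟩ := Finite.exists_min fun j => f j x
    exact ⟨j, Finset.mem_filter.2 ⟨Finset.mem_univ _, hj⟩⟩
  set g : α → Fin k := fun x => ((Finset.univ.filter fun j : Fin k => x ∈ M j).min' (hne x)) with hg
  have hgmem : ∀ x, x ∈ M (g x) := by
    intro x
    have := Finset.min'_mem _ (hne x)
    exact (Finset.mem_filter.1 this).2
  refine ⟨g, ?_, fun x j => hgmem x j⟩
  refine measurable_to_countable' fun j => ?_
  have hpre : g ⁻¹' {j} = M j ∩ ⋂ i, {x | x ∈ M i → j ≤ i} := by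
    ext x
    simp only [Set.mem_preimage, Set.mem_singleton_iff, Set.mem_inter_iff, Set.mem_iInter,
      Set.mem_setOf_eq]
    constructor
    · rintro rfl
      exact ⟨hgmem x, fun i hi =>
        Finset.min'_le (Finset.univ.filter fun j' : Fin k => x ∈ M j') i
          (Finset.mem_filter.2 ⟨Finset.mem_univ _, hi⟩)⟩
    · rintro ⟨hj, hmin⟩
      have h1 : g x ≤ j := Finset.min'_le (Finset.univ.filter fun j' : Fin k => x ∈ M j') j
        (Finset.mem_filter.2 ⟨Finset.mem_univ _, hj⟩)
      have h2 : j ≤ g x := hmin _ (hgmem x)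
      exact le_antisymm h1 h2
  rw [hpre]
  refine (hMmeas j).inter (MeasurableSet.iInter fun i => ?_)
  by_cases hji : j ≤ i
  · simp [hji]
  · have : {x : α | x ∈ M i → j ≤ i} = (M i)ᶜ := by ext x; simp [hji]
    rw [this]; exact (hMmeas i).compl

private lemma aux_norm_le_one {m : ℕ} {a b : EuclideanSpace ℝ (Fin m)}
    (ha : a ∈ Metric.closedBall 0 (1 / 2)) (hb : b ∈ Metric.closedBall 0 (1 / 2)) :
    ‖a - b‖ ≤ 1 := by
  rw [mem_closedBall_zero_iff] at ha hb
  calc ‖a - b‖ ≤ ‖a‖ + ‖b‖ := norm_sub_le a b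
    _ ≤ 1 := by linarith

/-- The key scalar inequality `(1 + ε/(2p))^p ≤ 1 + ε`. -/
private lemma aux_one_add_pow {p ε : ℝ} (hp : 1 ≤ p) (hε0 : 0 < ε) (hε : ε ≤ 1 / 4) :
    (1 + ε / (2 * p)) ^ p ≤ 1 + ε := by
  have hp0 : (0 : ℝ) < p := lt_of_lt_of_le one_pos hp
  have hx : (0 : ℝ) < 1 + ε / (2 * p) := by positivity
  rw [Real.rpow_def_of_pos hx]
  have hlog : Real.log (1 + ε / (2 * p)) ≤ ε / (2 * p) := by
    have := Real.log_le_sub_one_of_pos hx; linarith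
  have h1 : Real.log (1 + ε / (2 * p)) * p ≤ ε / 2 := by
    have h2 : Real.log (1 + ε / (2 * p)) * p ≤ ε / (2 * p) * p :=
      mul_le_mul_of_nonneg_right hlog hp0.le
    have h3 : ε / (2 * p) * p = ε / 2 := by field_simp
    linarith
  have hexp2 : Real.exp (ε / 2) ≤ 1 + ε := by
    have h2 : 1 - ε / 2 ≤ Real.exp (-(ε / 2)) := by
      have := Real.add_one_le_exp (-(ε / 2)); linarith
    have hpos2 : (0 : ℝ) < 1 - ε / 2 := by linarith
    have hmul : Real.exp (ε / 2) * (1 - ε / 2) ≤ 1 := by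
      calc Real.exp (ε / 2) * (1 - ε / 2) ≤ Real.exp (ε / 2) * Real.exp (-(ε / 2)) :=
            mul_le_mul_of_nonneg_left h2 (Real.exp_pos _).le
        _ = 1 := by rw [← Real.exp_add]; simp
    nlinarith [hmul, hpos2, hε0]
  calc Real.exp (Real.log (1 + ε / (2 * p)) * p) ≤ Real.exp (ε / 2) := Real.exp_le_exp.2 h1
    _ ≤ 1 + ε := hexp2

/-- If `δ ≤ (ε/(2p)) t^{1/p}` then `(t^{1/p} + δ)^p ≤ (1+ε) t`. -/
private lemma aux_fdel_le {p ε δ t : ℝ} (hp : 1 ≤ p) (hε0 : 0 < ε) (hε : ε ≤ 1 / 4)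
    (ht : 0 ≤ t) (hδ0 : 0 ≤ δ) (hδ : δ ≤ ε / (2 * p) * t ^ (1 / p)) :
    fdel p δ t ≤ (1 + ε) * t := by
  have hp0 : (0 : ℝ) < p := lt_of_lt_of_le one_pos hp
  rw [fdel_of_nonneg ht]
  have ht1 : (0 : ℝ) ≤ t ^ (1 / p) := Real.rpow_nonneg ht _
  have h1 : t ^ (1 / p) + δ ≤ t ^ (1 / p) * (1 + ε / (2 * p)) := by nlinarith
  have h2 : (t ^ (1 / p) + δ) ^ p ≤ (t ^ (1 / p) * (1 + ε / (2 * p))) ^ p :=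
    Real.rpow_le_rpow (by positivity) h1 hp0.le
  have h3 : (t ^ (1 / p) * (1 + ε / (2 * p))) ^ p
      = t * (1 + ε / (2 * p)) ^ p := by
    rw [Real.mul_rpow ht1 (by positivity), ← Real.rpow_mul ht, one_div,
      inv_mul_cancel₀ hp0.ne', Real.rpow_one]
  calc (t ^ (1 / p) + δ) ^ p ≤ t * (1 + ε / (2 * p)) ^ p := h3 ▸ h2
    _ ≤ t * (1 + ε) := mul_le_mul_of_nonneg_left (aux_one_add_pow hp hε0 hε) ht
    _ = (1 + ε) * t := mul_comm _ _

private lemma aux_cost_int {P : Measure α} [IsProbabilityMeasure P] {m k : ℕ} {p : ℝ}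
    (hp : 0 < p) {φ : α → EuclideanSpace ℝ (Fin m)} (hφ : Measurable φ)
    (hφb : ∀ᵐ x ∂P, φ x ∈ Metric.closedBall 0 (1 / 2))
    (u : Fin k → (Metric.closedBall (0 : EuclideanSpace ℝ (Fin m)) (1 / 2)))
    {g : α → Fin k} (hg : Measurable g) :
    Integrable (fun x => ‖φ x - (u (g x) : EuclideanSpace ℝ (Fin m))‖ ^ p) P := by
  have hmeas : Measurable fun x => ‖φ x - (u (g x) : EuclideanSpace ℝ (Fin m))‖ :=
    (hφ.sub ((measurable_of_finite fun j => (u j : EuclideanSpace ℝ (Fin m))).comp hg)).norm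
  refine aux_integrable
    (aux_measurable_rpow hp.le hmeas fun x => norm_nonneg _).aestronglyMeasurable
    (fun x => Real.rpow_nonneg (norm_nonneg _) _) ?_
  filter_upwards [hφb] with x hx
  exact Real.rpow_le_one (norm_nonneg _) (aux_norm_le_one hx (u (g x)).2) hp.le

private lemma aux_opt_meas {m k : ℕ} {p : ℝ} (hp : 0 < p)
    {φ : α → EuclideanSpace ℝ (Fin m)} (hφ : Measurable φ)
    (u : Fin k → (Metric.closedBall (0 : EuclideanSpace ℝ (Fin m)) (1 / 2))) :
    Measurable fun x => ⨅ j, ‖φ x - (u j : EuclideanSpace ℝ (Fin m))‖ ^ p :=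
  Measurable.iInf fun _ =>
    aux_measurable_rpow hp.le (hφ.sub measurable_const).norm fun _ => norm_nonneg _

private lemma aux_opt_ae_le_one {P : Measure α} [IsProbabilityMeasure P] {m k : ℕ} {p : ℝ}
    [Nonempty (Fin k)] (hp : 0 < p) {φ : α → EuclideanSpace ℝ (Fin m)}
    (hφb : ∀ᵐ x ∂P, φ x ∈ Metric.closedBall 0 (1 / 2))
    (u : Fin k → (Metric.closedBall (0 : EuclideanSpace ℝ (Fin m)) (1 / 2))) :
    ∀ᵐ x ∂P, (⨅ j, ‖φ x - (u j : EuclideanSpace ℝ (Fin m))‖ ^ p) ≤ 1 := by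
  filter_upwards [hφb] with x hx
  have h1 : (⨅ j, ‖φ x - (u j : EuclideanSpace ℝ (Fin m))‖ ^ p)
      ≤ ‖φ x - (u (Classical.arbitrary (Fin k)) : EuclideanSpace ℝ (Fin m))‖ ^ p :=
    ciInf_le (aux_bddBelow _ fun j => Real.rpow_nonneg (norm_nonneg _) _) _
  exact h1.trans
    (Real.rpow_le_one (norm_nonneg _) (aux_norm_le_one hx (u _).2) hp.le)

private lemma aux_opt_int {P : Measure α} [IsProbabilityMeasure P] {m k : ℕ} {p : ℝ}
    [Nonempty (Fin k)] (hp : 0 < p) {φ : α → EuclideanSpace ℝ (Fin m)} (hφ : Measurable φ)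
    (hφb : ∀ᵐ x ∂P, φ x ∈ Metric.closedBall 0 (1 / 2))
    (u : Fin k → (Metric.closedBall (0 : EuclideanSpace ℝ (Fin m)) (1 / 2))) :
    Integrable (fun x => ⨅ j, ‖φ x - (u j : EuclideanSpace ℝ (Fin m))‖ ^ p) P :=
  aux_integrable (aux_opt_meas hp hφ u).aestronglyMeasurable
    (fun x => Real.iInf_nonneg fun j => Real.rpow_nonneg (norm_nonneg _) _)
    (aux_opt_ae_le_one hp hφb u)

private lemma aux_opt_integral_le_one {P : Measure α} [IsProbabilityMeasure P] {m k : ℕ}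
    {p : ℝ} [Nonempty (Fin k)] (hp : 0 < p) {φ : α → EuclideanSpace ℝ (Fin m)}
    (hφ : Measurable φ) (hφb : ∀ᵐ x ∂P, φ x ∈ Metric.closedBall 0 (1 / 2))
    (u : Fin k → (Metric.closedBall (0 : EuclideanSpace ℝ (Fin m)) (1 / 2))) :
    ∫ x, (⨅ j, ‖φ x - (u j : EuclideanSpace ℝ (Fin m))‖ ^ p) ∂P ≤ 1 :=
  aux_integral_le_one (aux_opt_meas hp hφ u).aestronglyMeasurable
    (fun x => Real.iInf_nonneg fun j => Real.rpow_nonneg (norm_nonneg _) _)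
    (aux_opt_ae_le_one hp hφb u)

end Aux

set_option maxHeartbeats 1000000 in
/-- Dimensionality reduction for statistical Euclidean `(k,p)`-clustering: if the
discretization `T` moves points by at most `ε·OPT/(2p)`, the projection `π` preserves
partition costs of the discretized distribution up to `1 ± ε` factors, and
`G = {g⁽¹⁾,…,g⁽ᵏ⁾} ⊆ B_m` is a `β`-approximate solution for the projected discretized
distribution, then the partition of the input space induced by assigning `x` to the
nearest center of `G` from `π(x̃)` has cost at most `(1+ε)⁴·β·OPT`. -/
theorem dimension_reduction_lifted_partition {d m k : ℕ} (hk : 1 ≤ k)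
    (p ε β : ℝ) (hp : 1 ≤ p) (hε0 : 0 < ε) (hε : ε ≤ 1 / 4) (hβ : 1 ≤ β)
    (P : Measure (EuclideanSpace ℝ (Fin d))) [IsProbabilityMeasure P]
    (X : Set (EuclideanSpace ℝ (Fin d)))
    (hX : X ⊆ Metric.closedBall (0 : EuclideanSpace ℝ (Fin d)) (1 / 2))
    (hPX : ∀ᵐ x ∂P, x ∈ X)
    (T : EuclideanSpace ℝ (Fin d) → EuclideanSpace ℝ (Fin d)) (hTmeas : Measurable T)
    (hTball : ∀ x ∈ X, T x ∈ Metric.closedBall (0 : EuclideanSpace ℝ (Fin d)) (1 / 2))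
    (hTclose : ∀ x ∈ X, ‖x - T x‖ ≤ ε * pOPT p P id k / (2 * p))
    (π : EuclideanSpace ℝ (Fin d) → EuclideanSpace ℝ (Fin m)) (hπmeas : Measurable π)
    (hπball : ∀ x ∈ X, π (T x) ∈ Metric.closedBall (0 : EuclideanSpace ℝ (Fin m)) (1 / 2))
    (hpres : ∀ g : EuclideanSpace ℝ (Fin d) → Fin k, Measurable g →
      (1 + ε)⁻¹ * pCost p P T g ≤ pCost p P (fun x => π (T x)) g ∧
      pCost p P (fun x => π (T x)) g ≤ (1 + ε) * pCost p P T g)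
    (G : Fin k → EuclideanSpace ℝ (Fin m))
    (hG : ∀ j, G j ∈ Metric.closedBall (0 : EuclideanSpace ℝ (Fin m)) (1 / 2))
    (hGapx : ∫ x, (⨅ j, ‖π (T x) - G j‖ ^ p) ∂P ≤ β * pOPT p P (fun x => π (T x)) k)
    (h : EuclideanSpace ℝ (Fin d) → Fin k) (hhmeas : Measurable h)
    (hnear : ∀ x, ∀ j, ‖π (T x) - G (h x)‖ ≤ ‖π (T x) - G j‖) :
    pCost p P id h ≤ (1 + ε) ^ 4 * β * pOPT p P id k := by
  classical
  haveI : Nonempty (Fin k) := ⟨⟨0, hk⟩⟩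
  have hp0 : (0 : ℝ) < p := lt_of_lt_of_le one_pos hp
  have hpos : (0 : ℝ) < 1 + ε := by linarith
  have h0d : (0 : EuclideanSpace ℝ (Fin d)) ∈
      Metric.closedBall (0 : EuclideanSpace ℝ (Fin d)) (1 / 2) :=
    Metric.mem_closedBall_self (by norm_num)
  have h0m : (0 : EuclideanSpace ℝ (Fin m)) ∈
      Metric.closedBall (0 : EuclideanSpace ℝ (Fin m)) (1 / 2) :=
    Metric.mem_closedBall_self (by norm_num)
  haveI : Nonempty (Metric.closedBall (0 : EuclideanSpace ℝ (Fin d)) (1 / 2)) := ⟨⟨0, h0d⟩⟩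
  haveI : Nonempty (Metric.closedBall (0 : EuclideanSpace ℝ (Fin m)) (1 / 2)) := ⟨⟨0, h0m⟩⟩
  have haeid : ∀ᵐ x ∂P, x ∈ Metric.closedBall (0 : EuclideanSpace ℝ (Fin d)) (1 / 2) := by
    filter_upwards [hPX] with x hx using hX hx
  have haeT : ∀ᵐ x ∂P, T x ∈ Metric.closedBall (0 : EuclideanSpace ℝ (Fin d)) (1 / 2) := by
    filter_upwards [hPX] with x hx using hTball x hx
  have haeπ : ∀ᵐ x ∂P, π (T x) ∈ Metric.closedBall (0 : EuclideanSpace ℝ (Fin m)) (1 / 2) := by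
    filter_upwards [hPX] with x hx using hπball x hx
  have bddOid : BddBelow (Set.range fun u : Fin k →
      (Metric.closedBall (0 : EuclideanSpace ℝ (Fin d)) (1 / 2)) =>
      ∫ x, ⨅ j, ‖id x - (u j : EuclideanSpace ℝ (Fin d))‖ ^ p ∂P) :=
    aux_bddBelow _ fun u => integral_nonneg fun x =>
      Real.iInf_nonneg fun j => Real.rpow_nonneg (norm_nonneg _) _
  have bddOT : BddBelow (Set.range fun u : Fin k →
      (Metric.closedBall (0 : EuclideanSpace ℝ (Fin d)) (1 / 2)) =>
      ∫ x, ⨅ j, ‖T x - (u j : EuclideanSpace ℝ (Fin d))‖ ^ p ∂P) :=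
    aux_bddBelow _ fun u => integral_nonneg fun x =>
      Real.iInf_nonneg fun j => Real.rpow_nonneg (norm_nonneg _) _
  have bddOπ : BddBelow (Set.range fun u : Fin k →
      (Metric.closedBall (0 : EuclideanSpace ℝ (Fin m)) (1 / 2)) =>
      ∫ x, ⨅ j, ‖π (T x) - (u j : EuclideanSpace ℝ (Fin m))‖ ^ p ∂P) :=
    aux_bddBelow _ fun u => integral_nonneg fun x =>
      Real.iInf_nonneg fun j => Real.rpow_nonneg (norm_nonneg _) _
  have bddCid : ∀ g : EuclideanSpace ℝ (Fin d) → Fin k, BddBelow (Set.range fun u : Fin k →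
      (Metric.closedBall (0 : EuclideanSpace ℝ (Fin d)) (1 / 2)) =>
      ∫ x, ‖id x - (u (g x) : EuclideanSpace ℝ (Fin d))‖ ^ p ∂P) :=
    fun g => aux_bddBelow _ fun u => integral_nonneg fun x =>
      Real.rpow_nonneg (norm_nonneg _) _
  have bddCT : ∀ g : EuclideanSpace ℝ (Fin d) → Fin k, BddBelow (Set.range fun u : Fin k →
      (Metric.closedBall (0 : EuclideanSpace ℝ (Fin d)) (1 / 2)) =>
      ∫ x, ‖T x - (u (g x) : EuclideanSpace ℝ (Fin d))‖ ^ p ∂P) :=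
    fun g => aux_bddBelow _ fun u => integral_nonneg fun x =>
      Real.rpow_nonneg (norm_nonneg _) _
  have bddCπ : ∀ g : EuclideanSpace ℝ (Fin d) → Fin k, BddBelow (Set.range fun u : Fin k →
      (Metric.closedBall (0 : EuclideanSpace ℝ (Fin m)) (1 / 2)) =>
      ∫ x, ‖π (T x) - (u (g x) : EuclideanSpace ℝ (Fin m))‖ ^ p ∂P) :=
    fun g => aux_bddBelow _ fun u => integral_nonneg fun x =>
      Real.rpow_nonneg (norm_nonneg _) _
  set δ := ε * pOPT p P id k / (2 * p) with hδdef
  -- nonnegativity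
  have hO0nn : 0 ≤ pOPT p P id k :=
    le_ciInf fun u => integral_nonneg fun x =>
      Real.iInf_nonneg fun j => Real.rpow_nonneg (norm_nonneg _) _
  have hOTnn : 0 ≤ pOPT p P T k :=
    le_ciInf fun u => integral_nonneg fun x =>
      Real.iInf_nonneg fun j => Real.rpow_nonneg (norm_nonneg _) _
  have hOπnn : 0 ≤ pOPT p P (fun x => π (T x)) k :=
    le_ciInf fun u => integral_nonneg fun x =>
      Real.iInf_nonneg fun j => Real.rpow_nonneg (norm_nonneg _) _
  have hCTnn : 0 ≤ pCost p P T h :=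
    le_ciInf fun u => integral_nonneg fun x => Real.rpow_nonneg (norm_nonneg _) _
  have hδ0 : 0 ≤ δ := by
    rw [hδdef]; exact div_nonneg (mul_nonneg hε0.le hO0nn) (by positivity)
  -- OPT ≤ 1
  have hO01 : pOPT p P id k ≤ 1 := by
    have h1 : pOPT p P id k ≤ ∫ x, ⨅ j,
        ‖id x - (((fun _ => ⟨0, h0d⟩ : Fin k →
          (Metric.closedBall (0 : EuclideanSpace ℝ (Fin d)) (1 / 2)))) j :
          EuclideanSpace ℝ (Fin d))‖ ^ p ∂P :=
      ciInf_le bddOid _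
    exact h1.trans (aux_opt_integral_le_one hp0 measurable_id haeid _)
  -- δ ≤ (ε/(2p)) · OPT^{1/p}
  have hδle : δ ≤ ε / (2 * p) * (pOPT p P id k) ^ (1 / p) := by
    have ht : pOPT p P id k ≤ (pOPT p P id k) ^ (1 / p) := by
      have h1p : 1 / p ≤ 1 := by rw [div_le_one hp0]; exact hp
      have h1pn : (0 : ℝ) ≤ 1 / p := by positivity
      have := Real.rpow_le_rpow_of_exponent_ge' (y := 1) hO0nn hO01 h1pn h1p
      simpa [Real.rpow_one] using this
    calc δ = ε / (2 * p) * pOPT p P id k := by rw [hδdef]; ring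
      _ ≤ ε / (2 * p) * (pOPT p P id k) ^ (1 / p) :=
        mul_le_mul_of_nonneg_left ht (by positivity)
  -- Step A : pCost id h ≤ fdel (pCost T h)
  have stepA : pCost p P id h ≤ fdel p δ (pCost p P T h) := by
    simp only [pCost, id_eq]
    rw [fdel_ciInf hp hδ0 _ (bddCT h)]
    refine ciInf_mono (by simpa [id_eq] using bddCid h) fun u => ?_
    have hJnn : 0 ≤ ∫ x, ‖T x - (u (h x) : EuclideanSpace ℝ (Fin d))‖ ^ p ∂P :=
      integral_nonneg fun x => Real.rpow_nonneg (norm_nonneg _) _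
    rw [fdel_of_nonneg hJnn]
    have hFmeas : Measurable fun x => ‖T x - (u (h x) : EuclideanSpace ℝ (Fin d))‖ :=
      (hTmeas.sub ((measurable_of_finite fun j =>
        (u j : EuclideanSpace ℝ (Fin d))).comp hhmeas)).norm
    have hGmeas : Measurable fun x : EuclideanSpace ℝ (Fin d) =>
        ‖x - (u (h x) : EuclideanSpace ℝ (Fin d))‖ :=
      (measurable_id.sub ((measurable_of_finite fun j =>
        (u j : EuclideanSpace ℝ (Fin d))).comp hhmeas)).norm
    refine aux_minkowski hp hδ0 hFmeas.aemeasurable hGmeas.aemeasurable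
      (fun x => norm_nonneg _) (fun x => norm_nonneg _) ?_ ?_
    · filter_upwards [haeT] with x hx
      exact aux_norm_le_one hx (u (h x)).2
    · filter_upwards [hPX] with x hx
      have h3 : ‖x - (u (h x) : EuclideanSpace ℝ (Fin d))‖ ≤
          ‖x - T x‖ + ‖T x - (u (h x) : EuclideanSpace ℝ (Fin d))‖ := by
        have := dist_triangle x (T x) (u (h x) : EuclideanSpace ℝ (Fin d))
        simpa [dist_eq_norm] using this
      have h4 := hTclose x hx
      linarith
  -- Step 6 : pOPT T ≤ fdel (pOPT id)
  have step6 : pOPT p P T k ≤ fdel p δ (pOPT p P id k) := by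
    simp only [pOPT, id_eq]
    rw [fdel_ciInf hp hδ0 _ (by simpa [id_eq] using bddOid)]
    refine ciInf_mono bddOT fun u => ?_
    have hJnn : 0 ≤ ∫ x, ⨅ j, ‖x - (u j : EuclideanSpace ℝ (Fin d))‖ ^ p ∂P :=
      integral_nonneg fun x => Real.iInf_nonneg fun j => Real.rpow_nonneg (norm_nonneg _) _
    rw [fdel_of_nonneg hJnn]
    have e1 : ∫ x, ⨅ j, ‖T x - (u j : EuclideanSpace ℝ (Fin d))‖ ^ p ∂P
        = ∫ x, (⨅ j, ‖T x - (u j : EuclideanSpace ℝ (Fin d))‖) ^ p ∂P := by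
      congr 1; funext x
      exact (aux_ciInf_rpow hp0.le _ fun j => norm_nonneg _).symm
    have e2 : ∫ x, ⨅ j, ‖x - (u j : EuclideanSpace ℝ (Fin d))‖ ^ p ∂P
        = ∫ x, (⨅ j, ‖x - (u j : EuclideanSpace ℝ (Fin d))‖) ^ p ∂P := by
      congr 1; funext x
      exact (aux_ciInf_rpow hp0.le _ fun j => norm_nonneg _).symm
    rw [e1, e2]
    have hFmeas : Measurable fun x : EuclideanSpace ℝ (Fin d) =>
        ⨅ j, ‖x - (u j : EuclideanSpace ℝ (Fin d))‖ :=
      Measurable.iInf fun j => (measurable_id.sub measurable_const).norm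
    have hGmeas : Measurable fun x => ⨅ j, ‖T x - (u j : EuclideanSpace ℝ (Fin d))‖ :=
      Measurable.iInf fun j => (hTmeas.sub measurable_const).norm
    refine aux_minkowski hp hδ0 hFmeas.aemeasurable hGmeas.aemeasurable
      (fun x => Real.iInf_nonneg fun j => norm_nonneg _)
      (fun x => Real.iInf_nonneg fun j => norm_nonneg _) ?_ ?_
    · filter_upwards [haeid] with x hx
      refine (ciInf_le (aux_bddBelow _ fun j => norm_nonneg _)
        (Classical.arbitrary (Fin k))).trans ?_
      exact aux_norm_le_one hx (u _).2
    · filter_upwards [hPX] with x hx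
      obtain ⟨j₀, hj₀e, _⟩ := aux_ciInf_attained fun j =>
        ‖x - (u j : EuclideanSpace ℝ (Fin d))‖
      have h1 : (⨅ j, ‖T x - (u j : EuclideanSpace ℝ (Fin d))‖)
          ≤ ‖T x - (u j₀ : EuclideanSpace ℝ (Fin d))‖ :=
        ciInf_le (aux_bddBelow _ fun j => norm_nonneg _) j₀
      have h2 : ‖T x - (u j₀ : EuclideanSpace ℝ (Fin d))‖ ≤
          ‖T x - x‖ + ‖x - (u j₀ : EuclideanSpace ℝ (Fin d))‖ := by
        have := dist_triangle (T x) x (u j₀ : EuclideanSpace ℝ (Fin d))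
        simpa [dist_eq_norm] using this
      have h3 : ‖T x - x‖ ≤ δ := by rw [norm_sub_rev]; exact hTclose x hx
      rw [hj₀e]
      linarith
  have hfdelO : fdel p δ (pOPT p P id k) ≤ (1 + ε) * pOPT p P id k :=
    aux_fdel_le hp hε0 hε hO0nn hδ0 hδle
  -- Step 2
  have step2 : pCost p P T h ≤ (1 + ε) * pCost p P (fun x => π (T x)) h := by
    have h1 := (hpres h hhmeas).1
    have h2 := mul_le_mul_of_nonneg_left h1 hpos.le
    rwa [← mul_assoc, mul_inv_cancel₀ hpos.ne', one_mul] at h2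
  -- Step 3
  have step3 : pCost p P (fun x => π (T x)) h ≤ ∫ x, (⨅ j, ‖π (T x) - G j‖ ^ p) ∂P := by
    have huG := ciInf_le (bddCπ h) (fun j => ⟨G j, hG j⟩)
    refine le_trans huG (le_of_eq (integral_congr_ae (Filter.Eventually.of_forall fun x => ?_)))
    show ‖π (T x) - G (h x)‖ ^ p = ⨅ j, ‖π (T x) - G j‖ ^ p
    refine le_antisymm
      (le_ciInf fun j => Real.rpow_le_rpow (norm_nonneg _) (hnear x j) hp0.le)
      (ciInf_le (aux_bddBelow (fun j => ‖π (T x) - G j‖ ^ p)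
        fun j => Real.rpow_nonneg (norm_nonneg _) _) (h x))
  -- Step 5
  have step5 : pOPT p P (fun x => π (T x)) k ≤ (1 + ε) * pOPT p P T k := by
    have key : ∀ u : Fin k → (Metric.closedBall (0 : EuclideanSpace ℝ (Fin d)) (1 / 2)),
        pOPT p P (fun x => π (T x)) k ≤
          (1 + ε) * ∫ x, ⨅ j, ‖T x - (u j : EuclideanSpace ℝ (Fin d))‖ ^ p ∂P := by
      intro u
      obtain ⟨g, hgmeas, hgmin⟩ := exists_measurable_argmin
        (fun j x => ‖T x - (u j : EuclideanSpace ℝ (Fin d))‖)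
        (fun j => (hTmeas.sub measurable_const).norm)
      have h1 : pOPT p P (fun x => π (T x)) k ≤ pCost p P (fun x => π (T x)) g := by
        simp only [pOPT, pCost]
        refine ciInf_mono bddOπ fun v => ?_
        refine integral_mono_ae (aux_opt_int hp0 (hπmeas.comp hTmeas) haeπ v)
          (aux_cost_int hp0 (hπmeas.comp hTmeas) haeπ v hgmeas) ?_
        exact Filter.Eventually.of_forall fun x =>
          ciInf_le (aux_bddBelow _ fun j => Real.rpow_nonneg (norm_nonneg _) _) (g x)
      have h2 : pCost p P T g ≤ ∫ x, ⨅ j, ‖T x - (u j : EuclideanSpace ℝ (Fin d))‖ ^ p ∂P := by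
        have h2a : pCost p P T g ≤ ∫ x,
            ‖T x - (u (g x) : EuclideanSpace ℝ (Fin d))‖ ^ p ∂P :=
          ciInf_le (bddCT g) u
        refine h2a.trans
          (le_of_eq (integral_congr_ae (Filter.Eventually.of_forall fun x => ?_)))
        refine le_antisymm
          (le_ciInf fun j => Real.rpow_le_rpow (norm_nonneg _) (hgmin x j) hp0.le)
          (ciInf_le (aux_bddBelow _ fun j => Real.rpow_nonneg (norm_nonneg _) _) (g x))
      calc pOPT p P (fun x => π (T x)) k ≤ pCost p P (fun x => π (T x)) g := h1
        _ ≤ (1 + ε) * pCost p P T g := (hpres g hgmeas).2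
        _ ≤ (1 + ε) * ∫ x, ⨅ j, ‖T x - (u j : EuclideanSpace ℝ (Fin d))‖ ^ p ∂P :=
          mul_le_mul_of_nonneg_left h2 hpos.le
    have hdiv : pOPT p P (fun x => π (T x)) k / (1 + ε) ≤ pOPT p P T k := by
      refine le_ciInf fun u => ?_
      rw [div_le_iff₀ hpos]
      calc pOPT p P (fun x => π (T x)) k
          ≤ (1 + ε) * ∫ x, ⨅ j, ‖T x - (u j : EuclideanSpace ℝ (Fin d))‖ ^ p ∂P := key u
        _ = (∫ x, ⨅ j, ‖T x - (u j : EuclideanSpace ℝ (Fin d))‖ ^ p ∂P) * (1 + ε) :=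
          mul_comm _ _
    rw [div_le_iff₀ hpos] at hdiv
    linarith
  -- chain
  have chain : pCost p P T h ≤ (1 + ε) ^ 3 * β * pOPT p P id k := by
    have c2b : pCost p P (fun x => π (T x)) h ≤ β * pOPT p P (fun x => π (T x)) k :=
      step3.trans hGapx
    have t2 : pOPT p P (fun x => π (T x)) k ≤ (1 + ε) * ((1 + ε) * pOPT p P id k) :=
      step5.trans (mul_le_mul_of_nonneg_left (step6.trans hfdelO) hpos.le)
    calc pCost p P T h ≤ (1 + ε) * pCost p P (fun x => π (T x)) h := step2
      _ ≤ (1 + ε) * (β * pOPT p P (fun x => π (T x)) k) :=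
        mul_le_mul_of_nonneg_left c2b hpos.le
      _ ≤ (1 + ε) * (β * ((1 + ε) * ((1 + ε) * pOPT p P id k))) := by
        refine mul_le_mul_of_nonneg_left
          (mul_le_mul_of_nonneg_left t2 (by linarith)) hpos.le
      _ = (1 + ε) ^ 3 * β * pOPT p P id k := by ring
  -- final assembly
  have hC1 : (1 : ℝ) ≤ (1 + ε) ^ 3 * β := by
    have hA : (1 : ℝ) ≤ (1 + ε) ^ 3 := by
      have he : (1 + ε) ^ 3 = 1 + 3 * ε + 3 * ε ^ 2 + ε ^ 3 := by ring
      nlinarith [hε0.le, sq_nonneg ε, pow_nonneg hε0.le 3]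
    calc (1 : ℝ) = 1 * 1 := (one_mul 1).symm
      _ ≤ (1 + ε) ^ 3 * β := mul_le_mul hA hβ one_pos.le (by positivity)
  have hCnn : 0 ≤ (1 + ε) ^ 3 * β * pOPT p P id k :=
    mul_nonneg (mul_nonneg (by positivity) (by linarith)) hO0nn
  have hδle2 : δ ≤ ε / (2 * p) * ((1 + ε) ^ 3 * β * pOPT p P id k) ^ (1 / p) := by
    refine hδle.trans (mul_le_mul_of_nonneg_left ?_ (by positivity))
    refine Real.rpow_le_rpow hO0nn ?_ (by positivity)
    nlinarith [hO0nn, hC1]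
  have final1 : pCost p P id h ≤ fdel p δ ((1 + ε) ^ 3 * β * pOPT p P id k) :=
    stepA.trans (fdel_mono hp hδ0 chain)
  have final2 : fdel p δ ((1 + ε) ^ 3 * β * pOPT p P id k) ≤
      (1 + ε) * ((1 + ε) ^ 3 * β * pOPT p P id k) :=
    aux_fdel_le hp hε0 hε hCnn hδ0 hδle2
  calc pCost p P id h ≤ fdel p δ ((1 + ε) ^ 3 * β * pOPT p P id k) := final1
    _ ≤ (1 + ε) * ((1 + ε) ^ 3 * β * pOPT p P id k) := final2
    _ = (1 + ε) ^ 4 * β * pOPT p P id k := by ring
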